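/- For the two hanging springs system, the constraint submanifold C₁ is final: for every t₀, a, b ∈ ℝ there exist differentiable functions x₁, p : ℝ → ℝ with x₁(t₀) = a and p(t₀) = b satisfying the reduced (C₁) system. -/

import Mathlib

/-- Two hanging springs: the constraint submanifold `C₁` is final, i.e. through every
point of `C₁` there passes a solution of the reduced (C₁) Hamilton equations. -/
theorem springs_C₁_final
    (m g k₁ k₂ l₁ l₂ : ℝ) (hm : 0 < m) (hk₁ : 0 < k₁) (hk₂ : 0 < k₂) :
    ∀ t₀ a b : ℝ, ∃ x₁ p : ℝ → ℝ,
      Differentiable ℝ x₁ ∧ Differentiable ℝ p ∧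
      x₁ t₀ = a ∧ p t₀ = b ∧
      (∀ t, deriv x₁ t = k₂ * p t / (m * (k₁ + k₂))) ∧
      (∀ t, deriv p t = m * g - k₁ * (x₁ t - l₁)) := by
  intro t₀ a b
  have hden : 0 < m * (k₁ + k₂) := mul_pos hm (by linarith)
  obtain ⟨c, hc⟩ : ∃ c : ℝ, c = k₂ / (m * (k₁ + k₂)) := ⟨_, rfl⟩
  have hcpos : 0 < c := hc ▸ div_pos hk₂ hden
  obtain ⟨ω, hω⟩ : ∃ ω : ℝ, ω = Real.sqrt (c * k₁) := ⟨_, rfl⟩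
  have hωpos : 0 < ω := hω ▸ Real.sqrt_pos.2 (mul_pos hcpos hk₁)
  have hω2 : ω ^ 2 = c * k₁ := hω ▸ Real.sq_sqrt (le_of_lt (mul_pos hcpos hk₁))
  obtain ⟨X, hX⟩ : ∃ X : ℝ, X = l₁ + m * g / k₁ := ⟨_, rfl⟩
  have hmg : m * g = k₁ * (X - l₁) := by
    rw [hX]; field_simp; ring
  have hωne : ω ≠ 0 := ne_of_gt hωpos
  have hcne : c ≠ 0 := ne_of_gt hcpos
  set x₁ : ℝ → ℝ := fun t =>
    X + (a - X) * Real.cos (ω * (t - t₀)) + (c * b / ω) * Real.sin (ω * (t - t₀)) with hx₁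
  set p : ℝ → ℝ := fun t =>
    -((a - X) * ω / c) * Real.sin (ω * (t - t₀)) + b * Real.cos (ω * (t - t₀)) with hp
  have hθ : ∀ t : ℝ, HasDerivAt (fun t => ω * (t - t₀)) ω t := by
    intro t
    simpa using ((hasDerivAt_id t).sub_const t₀).const_mul ω
  have hdx : ∀ t : ℝ, HasDerivAt x₁
      (-(a - X) * (Real.sin (ω * (t - t₀)) * ω) + (c * b / ω) * (Real.cos (ω * (t - t₀)) * ω)) t := by
    intro t
    have h1 := ((Real.hasDerivAt_cos (ω * (t - t₀))).comp t (hθ t)).const_mul (a - X)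
    have h2 := ((Real.hasDerivAt_sin (ω * (t - t₀))).comp t (hθ t)).const_mul (c * b / ω)
    have := (h1.const_add X).add h2
    exact this.congr_deriv (by ring)
  have hdp : ∀ t : ℝ, HasDerivAt p
      (-((a - X) * ω / c) * (Real.cos (ω * (t - t₀)) * ω) + b * (-Real.sin (ω * (t - t₀)) * ω)) t := by
    intro t
    have h1 := ((Real.hasDerivAt_sin (ω * (t - t₀))).comp t (hθ t)).const_mul (-((a - X) * ω / c))
    have h2 := ((Real.hasDerivAt_cos (ω * (t - t₀))).comp t (hθ t)).const_mul b
    exact h1.add h2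
  have hcd : ∀ y : ℝ, k₂ * y / (m * (k₁ + k₂)) = c * y := by
    intro y; rw [hc]; ring
  refine ⟨x₁, p, fun t => (hdx t).differentiableAt, fun t => (hdp t).differentiableAt, ?_, ?_, ?_, ?_⟩
  · simp [hx₁]
  · simp [hp]
  · intro t
    rw [(hdx t).deriv, hcd, hp]
    field_simp
  · intro t
    rw [(hdp t).deriv, hx₁]
    simp only
    rw [hmg]
    field_simp
    linear_combination (-((a - X) * ω * Real.cos (ω * (t - t₀))
      + b * Real.sin (ω * (t - t₀)) * c)) * hω2
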